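/- arXiv:2106.14355 — 2 statements merged into one kernel-verified Lean document; each statement's English description precedes it below -/
import Mathlib

section
/- If B ∈ M_{2n}(ℝ) satisfies Bᵀ[ω]B = λ[ω] for a skew-symmetric invertible matrix [ω] and λ ∈ ℝ*, then det B = λⁿ. -/
open Matrix

section SqrtCompat

open scoped MatrixOrder

variable {ι : Type*} [Fintype ι] [DecidableEq ι]

noncomputable def Matrix.PosSemidef.sqrt {A : Matrix ι ι ℝ} (_hA : A.PosSemidef) :
    Matrix ι ι ℝ := CFC.sqrt A

lemma Matrix.PosSemidef.sqrt_mul_self {A : Matrix ι ι ℝ} (hA : A.PosSemidef) :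
    hA.sqrt * hA.sqrt = A := CFC.sqrt_mul_sqrt_self A hA.nonneg

lemma Matrix.PosSemidef.posSemidef_sqrt {A : Matrix ι ι ℝ} (hA : A.PosSemidef) :
    hA.sqrt.PosSemidef := (CFC.sqrt_nonneg A).posSemidef

end SqrtCompat

section Helpers

variable {ι : Type*} [Fintype ι] [DecidableEq ι]

private lemma traceTMul (R W : Matrix ι ι ℝ) :
    (Wᵀ * (R * W)).trace = ∑ j, (fun i => W i j) ⬝ᵥ (R *ᵥ fun i => W i j) := by
  simp only [Matrix.trace, Matrix.diag, Matrix.mul_apply, Matrix.transpose_apply,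
    dotProduct, Matrix.mulVec]

private lemma eq_zero_of_posDef_anticomm {R Z : Matrix ι ι ℝ} (hR : R.PosDef)
    (h : R * Z + Z * R = 0) : Z = 0 := by
  have quad_nonneg : ∀ x : ι → ℝ, 0 ≤ x ⬝ᵥ (R *ᵥ x) := fun x => by
    simpa using hR.posSemidef.dotProduct_mulVec_nonneg x
  have quad_pos : ∀ x : ι → ℝ, x ≠ 0 → 0 < x ⬝ᵥ (R *ᵥ x) := fun x hx => by
    simpa using hR.dotProduct_mulVec_pos hx
  have key : (Zᵀ * (R * Z)).trace + ((Zᵀ)ᵀ * (R * Zᵀ)).trace = 0 := by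
    have e1 : (Zᵀ)ᵀ * (R * Zᵀ) = Z * (R * Zᵀ) := by rw [transpose_transpose]
    have e2 : (Z * (R * Zᵀ)).trace = (Zᵀ * (Z * R)).trace := by
      rw [← Matrix.mul_assoc, Matrix.trace_mul_comm (Z * R) Zᵀ]
    rw [e1, e2, ← Matrix.trace_add, ← Matrix.mul_add, h, Matrix.mul_zero, Matrix.trace_zero]
  rw [traceTMul, traceTMul] at key
  have h1 : ∑ j, (fun i => Z i j) ⬝ᵥ (R *ᵥ fun i => Z i j) = 0 := by
    have hA := Finset.sum_nonneg (fun j (_ : j ∈ Finset.univ) => quad_nonneg (fun i => Z i j))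
    have hB := Finset.sum_nonneg (fun j (_ : j ∈ Finset.univ) => quad_nonneg (fun i => Zᵀ i j))
    linarith
  have hcols : ∀ j, (fun i => Z i j) = (0 : ι → ℝ) := by
    intro j
    by_contra hne
    have h0 := (Finset.sum_eq_zero_iff_of_nonneg
      (fun j _ => quad_nonneg (fun i => Z i j))).mp h1 j (Finset.mem_univ j)
    exact absurd h0 (ne_of_gt (quad_pos _ hne))
  ext i j
  exact congrFun (hcols j) i

private lemma commute_of_commute_sq {X R A : Matrix ι ι ℝ} (hR : R.PosDef)
    (hRA : R * R = A) (hX : X * A = A * X) : X * R = R * X := by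
  have key : R * (X * R - R * X) + (X * R - R * X) * R = X * (R * R) - (R * R) * X := by
    noncomm_ring
  rw [hRA, hX, sub_self] at key
  have := eq_zero_of_posDef_anticomm hR key
  rwa [sub_eq_zero] at this

private lemma posDef_transpose_mul_self {A : Matrix ι ι ℝ} (hA : IsUnit A.det) :
    (Aᵀ * A).PosDef := by
  refine Matrix.PosDef.of_dotProduct_mulVec_pos ?_ (fun x hx => ?_)
  · rw [Matrix.IsHermitian, conjTranspose_eq_transpose_of_trivial, transpose_mul,
      transpose_transpose]
  · have hxA : A *ᵥ x ≠ 0 := by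
      intro h0
      apply hx
      have hinj : Function.Injective A.mulVec :=
        Matrix.mulVec_injective_iff_isUnit.mpr ((Matrix.isUnit_iff_isUnit_det A).mpr hA)
      have : A *ᵥ x = A *ᵥ 0 := by rw [h0, Matrix.mulVec_zero]
      exact hinj this
    have : star x ⬝ᵥ ((Aᵀ * A) *ᵥ x) = (A *ᵥ x) ⬝ᵥ (A *ᵥ x) := by
      rw [star_trivial, ← Matrix.mulVec_mulVec, Matrix.dotProduct_mulVec,
        Matrix.vecMul_transpose]
    rw [this]
    have hnn : 0 ≤ (A *ᵥ x) ⬝ᵥ (A *ᵥ x) :=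
      Finset.sum_nonneg fun i _ => mul_self_nonneg _
    have hne : (A *ᵥ x) ⬝ᵥ (A *ᵥ x) ≠ 0 := fun hc => hxA (dotProduct_self_eq_zero.mp hc)
    exact lt_of_le_of_ne hnn (Ne.symm hne)

private lemma posDef_of_posSemidef_isUnit {A : Matrix ι ι ℝ} (hA : A.PosSemidef)
    (h : IsUnit A.det) : A.PosDef := by
  have hs : hA.sqrt * hA.sqrt = A := hA.sqrt_mul_self
  have hdet : IsUnit hA.sqrt.det := by
    have : hA.sqrt.det * hA.sqrt.det = A.det := by rw [← det_mul, hs]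
    exact isUnit_of_mul_isUnit_left (this ▸ h)
  have hsymm : hA.sqrt ᵀ = hA.sqrt := by
    rw [← conjTranspose_eq_transpose_of_trivial]
    exact hA.posSemidef_sqrt.isHermitian
  have := posDef_transpose_mul_self hdet
  rwa [hsymm, hs] at this

end Helpers
section Lcomm

variable {ι : Type*} [Fintype ι] [DecidableEq ι]

private lemma det_nonneg_of_commute {K M : Matrix ι ι ℝ} (hK : K * K = -1)
    (hKM : K * M = M * K) : 0 ≤ M.det := by
  classical
  set f : ℝ →+* ℂ := Complex.ofRealHom with hf
  set Kc : Matrix ι ι ℂ := K.map f with hKcdef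
  set Mc : Matrix ι ι ℂ := M.map f with hMcdef
  have hKc : Kc * Kc = -1 := by
    rw [hKcdef, ← Matrix.map_mul, hK]
    ext i j
    simp [Matrix.one_apply, apply_ite]
  have hCM : Kc * Mc = Mc * Kc := by
    rw [hKcdef, hMcdef, ← Matrix.map_mul, ← Matrix.map_mul, hKM]
  set a : Matrix ι ι ℂ := Complex.I • Kc with ha
  have haa : a * a = 1 := by
    rw [ha, Matrix.smul_mul, Matrix.mul_smul, hKc, smul_smul, Complex.I_mul_I]
    simp
  have hMa : Mc * a = a * Mc := by
    rw [ha, Matrix.smul_mul, Matrix.mul_smul, hCM]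
  set u : Matrix ι ι ℂ := 1 + a with hu
  set v : Matrix ι ι ℂ := 1 - a with hv
  have huv : u * v = 0 := by
    have : u * v = 1 - a * a := by rw [hu, hv]; noncomm_ring
    rw [this, haa, sub_self]
  have hvu : v * u = 0 := by
    have : v * u = 1 - a * a := by rw [hu, hv]; noncomm_ring
    rw [this, haa, sub_self]
  have huu : u * u = u + u := by
    have h1 : u * u = 1 + a * a + (a + a) := by rw [hu]; noncomm_ring
    rw [h1, haa, hu]; abel
  have hvv : v * v = v + v := by
    have h1 : v * v = 1 + a * a - (a + a) := by rw [hv]; noncomm_ring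
    rw [h1, haa, hv]; abel
  have hcu : u * Mc = Mc * u := by
    rw [hu, Matrix.add_mul, Matrix.mul_add, Matrix.one_mul, Matrix.mul_one, hMa]
  have hcv : v * Mc = Mc * v := by
    rw [hv, Matrix.sub_mul, Matrix.mul_sub, Matrix.one_mul, Matrix.mul_one, hMa]
  have key : (Mc * u + v) * (Mc * v + u) = (4:ℂ) • Mc := by
    calc (Mc * u + v) * (Mc * v + u)
        = Mc * (u * Mc) * v + Mc * (u * u) + (v * Mc) * v + v * u := by noncomm_ring
      _ = Mc * (Mc * u) * v + Mc * (u * u) + (Mc * v) * v + v * u := by rw [hcu, hcv]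
      _ = Mc * Mc * (u * v) + Mc * (u * u) + Mc * (v * v) + v * u := by noncomm_ring
      _ = Mc * (u + u) + Mc * (v + v) := by rw [huv, hvu, huu, hvv]; noncomm_ring
      _ = Mc * (u + u + (v + v)) := by noncomm_ring
      _ = Mc * ((4:ℂ) • 1) := by
          have huv4 : u + u + (v + v) = (4:ℂ) • 1 := by rw [hu, hv]; module
          rw [huv4]
      _ = (4:ℂ) • Mc := by rw [Matrix.mul_smul, Matrix.mul_one]
  set z : ℂ := (Mc * u + v).det with hz
  set cM : Matrix ι ι ℂ →+* Matrix ι ι ℂ := (starRingEnd ℂ).mapMatrix with hcM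
  have hMcc : cM Mc = Mc := by
    ext i j
    simp [hcM, RingHom.mapMatrix_apply, Matrix.map_apply, hMcdef, hf]
  have hucc : cM u = v := by
    ext i j
    simp [hcM, RingHom.mapMatrix_apply, Matrix.map_apply, hu, hv, ha, hKcdef, hf,
      Matrix.one_apply, apply_ite, sub_eq_add_neg]
  have hvcc : cM v = u := by
    ext i j
    simp [hcM, RingHom.mapMatrix_apply, Matrix.map_apply, hu, hv, ha, hKcdef, hf,
      Matrix.one_apply, apply_ite, sub_eq_add_neg]
  have hconj : Mc * v + u = (starRingEnd ℂ).mapMatrix (Mc * u + v) := by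
    rw [map_add, _root_.map_mul, hMcc, hucc, hvcc]
  have h2 : (Mc * v + u).det = starRingEnd ℂ z := by
    rw [hconj, hz, ← RingHom.map_det]
  have h3 : Mc.det = (M.det : ℂ) := by
    rw [hMcdef, ← RingHom.mapMatrix_apply, ← RingHom.map_det]; rfl
  have h1 : z * (Mc * v + u).det = ((4:ℂ))^(Fintype.card ι) * Mc.det := by
    rw [hz, ← det_mul, key, det_smul]
  have hzz : ((4:ℂ))^(Fintype.card ι) * ((M.det : ℝ) : ℂ) = ((Complex.normSq z : ℝ) : ℂ) := by
    rw [← h3, ← h1, h2, Complex.mul_conj]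
  have h4 : ((4:ℝ))^(Fintype.card ι) * M.det = Complex.normSq z := by
    rw [show ((4:ℂ)) = ((4:ℝ):ℂ) by norm_num, ← Complex.ofReal_pow, ← Complex.ofReal_mul] at hzz
    exact_mod_cast hzz
  have hpos : (0:ℝ) < 4 ^ (Fintype.card ι) := by positivity
  nlinarith [Complex.normSq_nonneg z]

end Lcomm
section Anticommuter

set_option maxHeartbeats 800000 in
private lemma exists_anticommuter {n : ℕ} (K : Matrix (Fin (2*n)) (Fin (2*n)) ℝ)
    (hK : K * K = -1) :
    ∃ E : Matrix (Fin (2*n)) (Fin (2*n)) ℝ, E * K = -(K * E) ∧ E.det = (-1:ℝ)^n := by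
  classical
  have hKv : ∀ v : Fin (2*n) → ℝ, K *ᵥ (K *ᵥ v) = -v := by
    intro v
    rw [Matrix.mulVec_mulVec, hK]
    simp [Matrix.neg_mulVec]
  letI : Module ℂ (Fin (2*n) → ℝ) :=
    { smul := fun z v => z.re • v + z.im • (K *ᵥ v)
      one_smul := fun v => by
        show (1:ℂ).re • v + (1:ℂ).im • (K *ᵥ v) = v
        simp
      mul_smul := fun z w v => by
        show (z*w).re • v + (z*w).im • (K *ᵥ v)
          = z.re • (w.re • v + w.im • (K *ᵥ v)) + z.im • (K *ᵥ (w.re • v + w.im • (K *ᵥ v)))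
        rw [Matrix.mulVec_add, Matrix.mulVec_smul, Matrix.mulVec_smul, hKv]
        simp only [Complex.mul_re, Complex.mul_im, sub_smul, add_smul, smul_add, smul_smul,
          smul_neg]
        module
      smul_zero := fun z => by
        show z.re • (0 : Fin (2*n) → ℝ) + z.im • (K *ᵥ (0 : Fin (2*n) → ℝ)) = 0
        simp
      smul_add := fun z v w => by
        show z.re • (v + w) + z.im • (K *ᵥ (v + w))
          = (z.re • v + z.im • (K *ᵥ v)) + (z.re • w + z.im • (K *ᵥ w))
        rw [Matrix.mulVec_add]
        module
      add_smul := fun z w v => by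
        show (z+w).re • v + (z+w).im • (K *ᵥ v)
          = (z.re • v + z.im • (K *ᵥ v)) + (w.re • v + w.im • (K *ᵥ v))
        simp only [Complex.add_re, Complex.add_im, add_smul]
        module
      zero_smul := fun v => by
        show (0:ℂ).re • v + (0:ℂ).im • (K *ᵥ v) = 0
        simp }
  have hsmul : ∀ (z : ℂ) (v : Fin (2*n) → ℝ), z • v = z.re • v + z.im • (K *ᵥ v) :=
    fun z v => rfl
  letI : IsScalarTower ℝ ℂ (Fin (2*n) → ℝ) := by
    constructor
    intro r z v
    rw [hsmul, hsmul]
    simp only [Complex.smul_re, Complex.smul_im, smul_eq_mul, smul_add, smul_smul]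
  letI : Module.Finite ℂ (Fin (2*n) → ℝ) := Module.Finite.right ℝ ℂ (Fin (2*n) → ℝ)
  have hrank : Module.finrank ℂ (Fin (2*n) → ℝ) = n := by
    have h := Module.finrank_mul_finrank ℝ ℂ (Fin (2*n) → ℝ)
    rw [Complex.finrank_real_complex, Module.finrank_fin_fun] at h
    omega
  have b : Module.Basis (Fin n) ℂ (Fin (2*n) → ℝ) := Module.finBasisOfFinrankEq ℂ _ hrank
  let e : (Fin (2*n) → ℝ) ≃ₗ[ℂ] (Fin n → ℂ) := b.equivFun
  let e' : (Fin (2*n) → ℝ) ≃ₗ[ℝ] (Fin n → ℂ) := e.restrictScalars ℝ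
  let conjL : (Fin n → ℂ) →ₗ[ℝ] (Fin n → ℂ) :=
    { toFun := fun x i => starRingEnd ℂ (x i)
      map_add' := fun x y => by funext i; simp
      map_smul' := fun r x => by
        funext i
        simp [Complex.real_smul] }
  let g : (Fin (2*n) → ℝ) →ₗ[ℝ] (Fin (2*n) → ℝ) :=
    (e'.symm : (Fin n → ℂ) →ₗ[ℝ] (Fin (2*n) → ℝ)).comp
      (conjL.comp (e' : (Fin (2*n) → ℝ) →ₗ[ℝ] (Fin n → ℂ)))
  have he'app : ∀ v, e' v = e v := fun v => rfl
  have he'sym : ∀ y, e'.symm y = e.symm y := fun y => rfl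
  have hgapp : ∀ v, g v = e.symm (conjL (e v)) := fun v => rfl
  refine ⟨LinearMap.toMatrix' g, ?_, ?_⟩
  · -- anticommute
    have hI : ∀ v : Fin (2*n) → ℝ, Complex.I • v = K *ᵥ v := fun v => by
      rw [hsmul]; simp
    have hconjI : ∀ x : Fin n → ℂ, conjL (Complex.I • x) = -(Complex.I • conjL x) := by
      intro x
      funext i
      show starRingEnd ℂ (Complex.I * x i) = -(Complex.I * starRingEnd ℂ (x i))
      rw [_root_.map_mul, Complex.conj_I]
      ring
    have hgK : ∀ v : Fin (2*n) → ℝ, g (K *ᵥ v) = -(K *ᵥ (g v)) := by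
      intro v
      rw [← hI, ← hI, hgapp, hgapp, _root_.map_smul e, hconjI, _root_.map_neg, _root_.map_smul e.symm]
    have hcomp : g ∘ₗ Matrix.toLin' K = -(Matrix.toLin' K ∘ₗ g) := by
      apply LinearMap.ext
      intro v
      simp only [LinearMap.comp_apply, LinearMap.neg_apply, Matrix.toLin'_apply]
      exact hgK v
    have := congrArg LinearMap.toMatrix' hcomp
    rwa [LinearMap.toMatrix'_comp, _root_.map_neg, LinearMap.toMatrix'_comp,
      LinearMap.toMatrix'_toLin'] at this
  · -- determinant
    rw [LinearMap.det_toMatrix']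
    have hdg : LinearMap.det g = LinearMap.det conjL := by
      have h := LinearMap.det_conj conjL e'.symm
      rw [LinearEquiv.symm_symm] at h
      exact h
    rw [hdg]
    let Bb : Module.Basis ((_ : Fin n) × Fin 2) ℝ (Fin n → ℂ) :=
      Pi.basis (fun _ : Fin n => Complex.basisOneI)
    have hmat : LinearMap.toMatrix Bb Bb conjL
        = Matrix.diagonal (fun p : (_ : Fin n) × Fin 2 => if p.2 = 0 then (1:ℝ) else -1) := by
      ext ⟨j, k⟩ ⟨j', k'⟩
      rw [LinearMap.toMatrix_apply, Pi.basis_repr]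
      have hBb : Bb ⟨j', k'⟩ = Pi.single j' (Complex.basisOneI k') := Pi.basis_apply _ _
      have hcval : conjL (Bb ⟨j', k'⟩) j
          = if j' = j then starRingEnd ℂ (Complex.basisOneI k') else 0 := by
        rw [hBb]
        show starRingEnd ℂ ((Pi.single j' (Complex.basisOneI k') : Fin n → ℂ) j)
          = if j' = j then starRingEnd ℂ (Complex.basisOneI k') else 0
        by_cases hj : j' = j
        · subst hj; simp
        · simp [Pi.single_apply, hj]
      rw [hcval]
      by_cases hj : j' = j
      · subst hj
        simp only [if_pos rfl]
        fin_cases k' <;> fin_cases k <;>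
          simp [Complex.coe_basisOneI, Complex.coe_basisOneI_repr, Matrix.diagonal_apply]
      · simp [Matrix.diagonal_apply, hj, Ne.symm hj, Sigma.ext_iff,
          Complex.coe_basisOneI_repr]
    rw [← LinearMap.det_toMatrix Bb, hmat, Matrix.det_diagonal, ← Finset.univ_sigma_univ,
      Finset.prod_sigma]
    simp [Fin.prod_univ_two]

end Anticommuter
section Main

private lemma det_sign_of_anticommute {n : ℕ} {K M : Matrix (Fin (2*n)) (Fin (2*n)) ℝ}
    (hK : K * K = -1) (h : K * M = -(M * K)) : 0 ≤ (-1:ℝ)^n * M.det := by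
  obtain ⟨E, hEK, hEdet⟩ := exists_anticommuter K hK
  have hcomm : K * (M * E) = (M * E) * K := by
    calc K * (M * E) = (K * M) * E := by rw [Matrix.mul_assoc]
      _ = (-(M * K)) * E := by rw [h]
      _ = M * (-(K * E)) := by noncomm_ring
      _ = M * (E * K) := by rw [← hEK]
      _ = (M * E) * K := by rw [Matrix.mul_assoc]
  have h0 := det_nonneg_of_commute hK hcomm
  rw [det_mul, hEdet] at h0
  linarith [h0]

set_option maxHeartbeats 1000000 in
theorem det_of_lambda_symplectic {n : ℕ}
    (ω : Matrix (Fin (2 * n)) (Fin (2 * n)) ℝ) (hskew : ωᵀ = -ω)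
    (hinv : IsUnit ω.det) (l : ℝ) (hl : l ≠ 0)
    (B : Matrix (Fin (2 * n)) (Fin (2 * n)) ℝ) (hB : Bᵀ * ω * B = l • ω) :
    B.det = l ^ n := by
  have hωdet : ω.det ≠ 0 := hinv.ne_zero
  have hcard : Fintype.card (Fin (2*n)) = 2*n := Fintype.card_fin _
  have h1 := congrArg Matrix.det hB
  rw [det_mul, det_mul, det_transpose, det_smul, hcard] at h1
  have hsq : B.det * B.det = l ^ (2*n) :=
    mul_right_cancel₀ hωdet (by linear_combination h1)
  have hsq' : B.det * B.det = (l^n) * (l^n) := by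
    rw [hsq, show 2*n = n + n from two_mul n, pow_add]
  have hBne : B.det ≠ 0 := by
    intro h0
    rw [h0, mul_zero] at hsq
    exact pow_ne_zero (2*n) hl hsq.symm
  have hpm : B.det = l^n ∨ B.det = -(l^n) := by
    have hfac : (B.det - l^n) * (B.det + l^n) = 0 := by linear_combination hsq'
    rcases mul_eq_zero.mp hfac with h | h
    · left; linarith [sub_eq_zero.mp h]
    · right; linarith [h]
  -- construct the complex structure K
  set S : Matrix (Fin (2*n)) (Fin (2*n)) ℝ := ωᵀ * ω with hSdef
  have hS : S.PosDef := posDef_transpose_mul_self hωdet.isUnit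
  have hSneg : S = -(ω * ω) := by rw [hSdef, hskew]; noncomm_ring
  have hSω : ω * S = S * ω := by rw [hSneg]; noncomm_ring
  set Q : Matrix (Fin (2*n)) (Fin (2*n)) ℝ := hS.posSemidef.sqrt with hQdef
  have hQQ : Q * Q = S := hS.posSemidef.sqrt_mul_self
  have hQdetU : IsUnit Q.det := by
    have h2 : Q.det * Q.det = S.det := by rw [← det_mul, hQQ]
    exact isUnit_of_mul_isUnit_left (h2 ▸ hS.det_pos.ne'.isUnit)
  have hQ : Q.PosDef := posDef_of_posSemidef_isUnit hS.posSemidef.posSemidef_sqrt hQdetU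
  set P : Matrix (Fin (2*n)) (Fin (2*n)) ℝ := hQ.posSemidef.sqrt with hPdef
  have hPP : P * P = Q := hQ.posSemidef.sqrt_mul_self
  have hPdetU : IsUnit P.det := by
    have h2 : P.det * P.det = Q.det := by rw [← det_mul, hPP]
    exact isUnit_of_mul_isUnit_left (h2 ▸ hQdetU)
  have hP : P.PosDef := posDef_of_posSemidef_isUnit hQ.posSemidef.posSemidef_sqrt hPdetU
  have hωQ : ω * Q = Q * ω := commute_of_commute_sq hQ hQQ hSω
  have hωP : ω * P = P * ω := commute_of_commute_sq hP hPP hωQ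
  have hQinv : Q⁻¹ * ω = ω * Q⁻¹ := by
    calc Q⁻¹ * ω = Q⁻¹ * (ω * (Q * Q⁻¹)) := by
          rw [Matrix.mul_nonsing_inv _ hQdetU, Matrix.mul_one]
      _ = Q⁻¹ * (Q * ω) * Q⁻¹ := by rw [← Matrix.mul_assoc ω Q _, hωQ]; noncomm_ring
      _ = ω * Q⁻¹ := by
          rw [← Matrix.mul_assoc Q⁻¹ Q ω, Matrix.nonsing_inv_mul _ hQdetU, Matrix.one_mul]
  have hPQ : P * Q = Q * P := by
    rw [← hPP]; noncomm_ring
  have hPQinv : P * Q⁻¹ = Q⁻¹ * P := by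
    calc P * Q⁻¹ = Q⁻¹ * (Q * P) * Q⁻¹ := by
          rw [← Matrix.mul_assoc Q⁻¹ Q P, Matrix.nonsing_inv_mul _ hQdetU, Matrix.one_mul]
      _ = Q⁻¹ * (P * Q) * Q⁻¹ := by rw [hPQ]
      _ = Q⁻¹ * P := by
          rw [← Matrix.mul_assoc Q⁻¹ P Q, Matrix.mul_assoc (Q⁻¹ * P) Q Q⁻¹,
            Matrix.mul_nonsing_inv _ hQdetU, Matrix.mul_one]
  set K : Matrix (Fin (2*n)) (Fin (2*n)) ℝ := ω * Q⁻¹ with hKdef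
  have hKK : K * K = -1 := by
    have e1 : K * K = ω * (Q⁻¹ * ω) * Q⁻¹ := by rw [hKdef]; noncomm_ring
    have e2 : Q⁻¹ * Q⁻¹ = S⁻¹ := by rw [← hQQ, Matrix.mul_inv_rev]
    have e3 : ω * ω = -S := by rw [hSneg, neg_neg]
    calc K * K = ω * (Q⁻¹ * ω) * Q⁻¹ := e1
      _ = (ω * ω) * (Q⁻¹ * Q⁻¹) := by rw [hQinv, hKdef]; noncomm_ring
      _ = (-S) * S⁻¹ := by rw [e2, e3]
      _ = -1 := by rw [Matrix.neg_mul, Matrix.mul_nonsing_inv _ hS.det_pos.ne'.isUnit]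
  have hPKP : P * K * P = ω := by
    calc P * K * P = (P * ω) * (Q⁻¹ * P) := by rw [hKdef]; noncomm_ring
      _ = (ω * P) * (P * Q⁻¹) := by rw [hωP, ← hPQinv]
      _ = ω * ((P * P) * Q⁻¹) := by noncomm_ring
      _ = ω := by rw [hPP, Matrix.mul_nonsing_inv _ hQdetU, Matrix.mul_one]
  have hPsym : Pᵀ = P := by
    rw [← conjTranspose_eq_transpose_of_trivial]
    exact hP.isHermitian
  set C : Matrix (Fin (2*n)) (Fin (2*n)) ℝ := P * B * P⁻¹ with hCdef
  have hCt : Cᵀ = P⁻¹ * Bᵀ * P := by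
    rw [hCdef, transpose_mul, transpose_mul, Matrix.transpose_nonsing_inv, hPsym,
      Matrix.mul_assoc]
  have hCKC : Cᵀ * K * C = l • K := by
    have e1 : Cᵀ * K * C = P⁻¹ * (Bᵀ * (P * K * P) * B) * P⁻¹ := by
      rw [hCt, hCdef]; noncomm_ring
    rw [e1, hPKP, hB, Matrix.mul_smul, Matrix.smul_mul]
    congr 1
    rw [← hPKP]
    have e4 : P⁻¹ * (P * K * P) * P⁻¹ = (P⁻¹ * P) * K * (P * P⁻¹) := by noncomm_ring
    rw [e4, Matrix.nonsing_inv_mul _ hPdetU, Matrix.mul_nonsing_inv _ hPdetU,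
      Matrix.one_mul, Matrix.mul_one]
  have hCdet : C.det = B.det := by
    rw [hCdef]
    exact Matrix.det_conj hP.isUnit B
  have hCdetne : C.det ≠ 0 := by rw [hCdet]; exact hBne
  have hCunit : IsUnit C.det := hCdetne.isUnit
  have hCtKCK : Cᵀ * (K * C * K) = (-l) • 1 := by
    calc Cᵀ * (K * C * K) = (Cᵀ * K * C) * K := by noncomm_ring
      _ = (l • K) * K := by rw [hCKC]
      _ = l • (K * K) := by rw [Matrix.smul_mul]
      _ = (-l) • 1 := by rw [hKK]; simp
  have hCtinv : (Cᵀ)⁻¹ = (-l⁻¹) • (K * C * K) := by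
    apply Matrix.inv_eq_right_inv
    rw [Matrix.mul_smul, hCtKCK, smul_smul]
    rw [show -l⁻¹ * -l = 1 by field_simp]
    simp
  have hG : (Cᵀ * C).PosDef := posDef_transpose_mul_self hCunit
  have hGdetU : IsUnit (Cᵀ * C).det := hG.det_pos.ne'.isUnit
  have hCG : C * (Cᵀ * C)⁻¹ = (Cᵀ)⁻¹ := by
    rw [Matrix.mul_inv_rev, ← Matrix.mul_assoc, Matrix.mul_nonsing_inv _ hCunit,
      Matrix.one_mul]
  -- helper for the positive factor
  have hNpos : ∀ c : ℝ, 0 < c → 0 < (1 + c • (Cᵀ * C)⁻¹).det := by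
    intro c hc
    have hNalt : 1 + c • (Cᵀ * C)⁻¹ = (Cᵀ * C)⁻¹ * (Cᵀ * C + c • 1) := by
      rw [Matrix.mul_add, Matrix.nonsing_inv_mul _ hGdetU, Matrix.mul_smul, Matrix.mul_one]
    rw [hNalt, det_mul]
    apply mul_pos
    · rw [Matrix.det_nonsing_inv, Ring.inverse_eq_inv]
      exact inv_pos.mpr hG.det_pos
    · have hc1 : (c • (1 : Matrix (Fin (2*n)) (Fin (2*n)) ℝ)).PosDef := by
        rw [Matrix.smul_one_eq_diagonal]
        exact Matrix.PosDef.diagonal (fun _ => hc)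
      exact (Matrix.PosDef.posSemidef_add hG.posSemidef hc1).det_pos
  rcases lt_or_gt_of_ne hl with hneg | hpos
  · -- l < 0
    set N : Matrix (Fin (2*n)) (Fin (2*n)) ℝ := 1 + (-l) • (Cᵀ * C)⁻¹ with hNdef
    have hNdet : 0 < N.det := hNpos (-l) (by linarith)
    have hM : C * N = C + K * C * K := by
      rw [hNdef, Matrix.mul_add, Matrix.mul_one, Matrix.mul_smul, hCG, hCtinv, smul_smul]
      rw [show -l * -l⁻¹ = 1 by field_simp]
      simp
    have hMK : K * (C * N) = -((C * N) * K) := by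
      rw [hM]
      have e1 : K * (C + K * C * K) = K * C + (K * K) * C * K := by noncomm_ring
      have e2 : (C + K * C * K) * K = C * K + K * C * (K * K) := by noncomm_ring
      rw [e1, e2, hKK]
      noncomm_ring
    have h0 := det_sign_of_anticommute hKK hMK
    rw [det_mul] at h0
    rcases hpm with h | h
    · exact h
    · exfalso
      have h7 : (0:ℝ) < (-l)^n := pow_pos (by linarith) n
      have h8 : (-1:ℝ)^n * l^n = (-l)^n := by rw [← mul_pow]; norm_num
      have h9 : C.det = -(l^n) := by rw [hCdet]; exact h
      have h10 : (-1:ℝ)^n * (C.det * N.det) = -((-l)^n * N.det) := by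
        rw [h9, ← h8]; ring
      have h11 : 0 < (-l)^n * N.det := mul_pos h7 hNdet
      linarith
  · -- 0 < l
    set N : Matrix (Fin (2*n)) (Fin (2*n)) ℝ := 1 + l • (Cᵀ * C)⁻¹ with hNdef
    have hNdet : 0 < N.det := hNpos l hpos
    have hM : C * N = C - K * C * K := by
      rw [hNdef, Matrix.mul_add, Matrix.mul_one, Matrix.mul_smul, hCG, hCtinv, smul_smul]
      rw [show l * -l⁻¹ = -1 by field_simp]
      simp [sub_eq_add_neg]
    have hMK : K * (C * N) = (C * N) * K := by
      rw [hM]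
      have e1 : K * (C - K * C * K) = K * C - (K * K) * C * K := by noncomm_ring
      have e2 : (C - K * C * K) * K = C * K - K * C * (K * K) := by noncomm_ring
      rw [e1, e2, hKK]
      noncomm_ring
    have h0 := det_nonneg_of_commute hKK hMK
    rw [det_mul] at h0
    rcases hpm with h | h
    · exact h
    · exfalso
      have h7 : (0:ℝ) < l^n := pow_pos hpos n
      have h9 : C.det = -(l^n) := by rw [hCdet]; exact h
      have h10 : C.det < 0 := by rw [h9]; linarith
      have h11 : C.det * N.det < 0 := mul_neg_of_neg_of_pos h10 hNdet
      linarith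

end Main
end

section
/- Sp_ω(n;ℝ) is both open and closed in Ω_n (with the subspace topology inherited from GL(2n,ℝ)); consequently Ω_n is not connected. -/
open Matrix

/-- Any nondegenerate alternating bilinear form on a finite-dimensional real vector
space admits a linear map negating it. -/
theorem exists_neg_selfequiv :
    ∀ (k : ℕ) (V : Type) [AddCommGroup V] [Module ℝ V] [FiniteDimensional ℝ V],
      Module.finrank ℝ V = k →
      ∀ β : V →ₗ[ℝ] V →ₗ[ℝ] ℝ, (∀ x, β x x = 0) →
      (∀ x, (∀ y, β x y = 0) → x = 0) →
      ∃ C : V →ₗ[ℝ] V, ∀ x y, β (C x) (C y) = -β x y := by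
  intro k
  induction k using Nat.strong_induction_on with
  | _ k ih =>
    intro V _ _ _ hk β halt hnd
    have hskw : ∀ x y, β x y = -β y x := by
      intro x y
      have h := halt (x + y)
      simp only [map_add, LinearMap.add_apply, halt x, halt y, add_zero, zero_add] at h
      linarith
    by_cases htriv : ∀ x : V, x = 0
    · exact ⟨LinearMap.id, fun x y => by rw [htriv x, htriv y]; simp⟩
    push_neg at htriv
    obtain ⟨u, hu⟩ := htriv
    have hv₀ : ∃ v₀, β u v₀ ≠ 0 := by
      by_contra h; push_neg at h; exact hu (hnd u h)
    obtain ⟨v₀, hv₀⟩ := hv₀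
    obtain ⟨v, huv⟩ : ∃ v, β u v = 1 := by
      refine ⟨(β u v₀)⁻¹ • v₀, ?_⟩
      rw [_root_.map_smul, smul_eq_mul]
      exact inv_mul_cancel₀ hv₀
    have hvu : β v u = -1 := by rw [hskw, huv]
    set W : Submodule ℝ V := LinearMap.ker (β u) ⊓ LinearMap.ker (β v) with hW
    have hmemW : ∀ x, x ∈ W ↔ β u x = 0 ∧ β v x = 0 := by
      intro x; simp [hW, LinearMap.mem_ker]
    set p : V →ₗ[ℝ] V := ((β.flip v).smulRight u) - ((β.flip u).smulRight v) with hp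
    have hpx : ∀ x, p x = β x v • u - β x u • v := by
      intro x
      simp [hp, LinearMap.sub_apply, LinearMap.smulRight_apply, LinearMap.flip_apply]
    have hrW : ∀ x, x - p x ∈ W := by
      intro x
      rw [hmemW]
      constructor
      · rw [map_sub, hpx, map_sub, _root_.map_smul, _root_.map_smul, halt, huv]
        simp [hskw x u]
      · rw [map_sub, hpx, map_sub, _root_.map_smul, _root_.map_smul, halt, hvu]
        simp [hskw x v]
    -- restricted form
    set βW : W →ₗ[ℝ] W →ₗ[ℝ] ℝ := β.compl₁₂ W.subtype W.subtype with hβW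
    have hβWapp : ∀ w w' : W, βW w w' = β (w : V) (w' : V) := fun w w' => rfl
    have hWne : W ≠ ⊤ := by
      intro h
      have : u ∈ W := h ▸ Submodule.mem_top
      rw [hmemW] at this
      rw [this.2] at hvu
      norm_num at hvu
    have hWlt : Module.finrank ℝ W < k := by
      rw [← hk]
      exact Submodule.finrank_lt hWne
    obtain ⟨C₀, hC₀⟩ := ih _ hWlt W rfl βW
      (fun w => halt (w : V))
      (by
        intro w hw
        rw [← Submodule.coe_eq_zero]
        apply hnd
        intro y
        have hwu : β (w : V) u = 0 := by
          rw [hskw]; rw [((hmemW _).mp w.2).1]; ring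
        have hwv : β (w : V) v = 0 := by
          rw [hskw]; rw [((hmemW _).mp w.2).2]; ring
        have h2 : β (w : V) (y - p y) = 0 := by
          have := hw ⟨y - p y, hrW y⟩
          rw [hβWapp] at this
          exact this
        have hy : β (w : V) y = β (w : V) (p y) + β (w : V) (y - p y) := by
          rw [← map_add]
          congr 1
          abel
        rw [hy, h2, hpx, map_sub, _root_.map_smul, _root_.map_smul, hwu, hwv]
        simp)
    set rr : V →ₗ[ℝ] W := (LinearMap.id - p).codRestrict W
      (fun x => by simpa using hrW x) with hrr
    have hrrx : ∀ x, ((rr x : W) : V) = x - p x := by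
      intro x; simp [hrr, LinearMap.codRestrict_apply]
    set q : V →ₗ[ℝ] V := ((β.flip v).smulRight u) + ((β.flip u).smulRight v) with hq
    set C : V →ₗ[ℝ] V := q + W.subtype.comp (C₀.comp rr) with hC
    have hCx : ∀ x, C x = β x v • u + β x u • v + ((C₀ (rr x) : W) : V) := by
      intro x
      simp [hC, hq, LinearMap.add_apply, LinearMap.smulRight_apply, LinearMap.flip_apply]
    have expand : ∀ (c d : ℝ) (z : V), z ∈ W → ∀ (c' d' : ℝ) (z' : V), z' ∈ W →
        β (c • u + d • v + z) (c' • u + d' • v + z') = c * d' - c' * d + β z z' := by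
      intro c d z hz c' d' z' hz'
      obtain ⟨h1', h2'⟩ := (hmemW z').mp hz'
      have h3 : β z u = 0 := by rw [hskw, ((hmemW z).mp hz).1]; ring
      have h4 : β z v = 0 := by rw [hskw, ((hmemW z).mp hz).2]; ring
      simp only [map_add, _root_.map_smul, LinearMap.add_apply, LinearMap.smul_apply,
        smul_eq_mul, halt, huv, hvu, h1', h2', h3, h4]
      ring
    refine ⟨C, fun x y => ?_⟩
    have hxdec : x = β x v • u + (-(β x u)) • v + (x - p x) := by
      rw [neg_smul, ← sub_eq_add_neg _ ((β x u) • v), ← hpx]; abel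
    have hydec : y = β y v • u + (-(β y u)) • v + (y - p y) := by
      rw [neg_smul, ← sub_eq_add_neg _ ((β y u) • v), ← hpx]; abel
    have hxy : β x y = β x v * -(β y u) - β y v * -(β x u) + β (x - p x) (y - p y) := by
      conv_lhs => rw [hxdec, hydec]
      exact expand _ _ _ (hrW x) _ _ _ (hrW y)
    have hC₀' := hC₀ (rr x) (rr y)
    rw [hβWapp, hβWapp, hrrx, hrrx] at hC₀'
    have hCxy : β (C x) (C y)
        = β x v * β y u - β y v * β x u + β ((C₀ (rr x) : W) : V) ((C₀ (rr y) : W) : V) := by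
      rw [hCx, hCx]
      exact expand _ _ _ (C₀ (rr x)).2 _ _ _ (C₀ (rr y)).2
    rw [hCxy, hC₀', hxy]
    ring


theorem matrix_entry_eq {m : ℕ} (M : Matrix (Fin m) (Fin m) ℝ) (i j : Fin m) :
    M i j = Pi.single i 1 ⬝ᵥ M *ᵥ Pi.single j 1 := by
  rw [Matrix.mulVec_single_one, single_one_dotProduct]
  rfl

theorem exists_antisymplectic {m : ℕ} (ω : Matrix (Fin m) (Fin m) ℝ)
    (hskew : ωᵀ = -ω) (hinv : IsUnit ω.det) :
    ∃ B : Matrix (Fin m) (Fin m) ℝ, Bᵀ * ω * B = -ω := by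
  classical
  have hskew' : ω = -ωᵀ := by rw [hskew, neg_neg]
  set β : (Fin m → ℝ) →ₗ[ℝ] (Fin m → ℝ) →ₗ[ℝ] ℝ :=
    LinearMap.mk₂ ℝ (fun x y => x ⬝ᵥ ω *ᵥ y)
      (fun x x' y => by rw [add_dotProduct])
      (fun c x y => by rw [smul_dotProduct])
      (fun x y y' => by rw [Matrix.mulVec_add, dotProduct_add])
      (fun c x y => by rw [Matrix.mulVec_smul, dotProduct_smul]) with hβ
  have hβapp : ∀ x y, β x y = x ⬝ᵥ ω *ᵥ y := fun x y => rfl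
  have halt : ∀ x, β x x = 0 := by
    intro x
    have h1 : x ⬝ᵥ ω *ᵥ x = -(x ⬝ᵥ ωᵀ *ᵥ x) := by
      conv_lhs => rw [hskew']
      rw [Matrix.neg_mulVec, dotProduct_neg]
    have h2 : x ⬝ᵥ ωᵀ *ᵥ x = x ⬝ᵥ ω *ᵥ x := by
      rw [Matrix.mulVec_transpose, dotProduct_comm, ← Matrix.dotProduct_mulVec]
    rw [hβapp]
    rw [h2] at h1
    linarith
  have hnd : ∀ x, (∀ y, β x y = 0) → x = 0 := by
    intro x hx
    have hxv : x ᵥ* ω = 0 := by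
      funext j
      have := hx (Pi.single j 1)
      rw [hβapp, Matrix.dotProduct_mulVec, dotProduct_single_one] at this
      simpa using this
    have := congrArg (fun z => z ᵥ* ω⁻¹) hxv
    simpa [Matrix.vecMul_vecMul, Matrix.mul_nonsing_inv ω hinv] using this
  obtain ⟨C, hC⟩ := exists_neg_selfequiv m (Fin m → ℝ) (Module.finrank_fin_fun ℝ) β halt hnd
  refine ⟨LinearMap.toMatrix' C, ?_⟩
  set B := LinearMap.toMatrix' C with hB
  have hBmul : ∀ x, B *ᵥ x = C x := by
    intro x
    rw [hB, ← Matrix.toLin'_apply, Matrix.toLin'_toMatrix']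
  ext i j
  rw [matrix_entry_eq (Bᵀ * ω * B) i j]
  rw [← Matrix.mulVec_mulVec, ← Matrix.mulVec_mulVec]
  rw [Matrix.dotProduct_mulVec _ Bᵀ, Matrix.vecMul_transpose, hBmul, hBmul]
  have := hC (Pi.single i 1) (Pi.single j 1)
  rw [hβapp, hβapp] at this
  rw [this]
  rw [← matrix_entry_eq ω i j]
  rfl

theorem sp_omega_clopen_in_semisymplectic {n : ℕ} (hn : 0 < n)
    (ω : Matrix (Fin (2 * n)) (Fin (2 * n)) ℝ) (hskew : ωᵀ = -ω)
    (hinv : IsUnit ω.det) :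
    let Ω : Set (Matrix (Fin (2 * n)) (Fin (2 * n)) ℝ) :=
      {B | Bᵀ * ω * B = ω ∨ Bᵀ * ω * B = -ω}
    IsOpen {x : Ω | (x : Matrix (Fin (2 * n)) (Fin (2 * n)) ℝ)ᵀ * ω * x = ω} ∧
    IsClosed {x : Ω | (x : Matrix (Fin (2 * n)) (Fin (2 * n)) ℝ)ᵀ * ω * x = ω} ∧
    ¬ IsPreconnected (Set.univ : Set Ω) := by
  intro Ω
  have hne : Nonempty (Fin (2 * n)) := ⟨⟨0, by omega⟩⟩
  have hω0 : ω ≠ 0 := by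
    intro h
    rw [h, Matrix.det_zero] at hinv
    exact zero_ne_one (isUnit_zero_iff.mp hinv)
  have hωneg : ω ≠ -ω := by
    intro h
    apply hω0
    have : ω + ω = 0 := by nth_rewrite 1 [h]; abel
    have h2 : (2 : ℝ) • ω = 0 := by rw [two_smul]; exact this
    simpa using (smul_eq_zero.mp h2).resolve_left (by norm_num)
  set f : Ω → Matrix (Fin (2 * n)) (Fin (2 * n)) ℝ :=
    fun x => (x : Matrix (Fin (2 * n)) (Fin (2 * n)) ℝ)ᵀ * ω * x with hf
  have hfc : Continuous f :=
    (continuous_subtype_val.matrix_transpose.matrix_mul continuous_const).matrix_mul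
      continuous_subtype_val
  set S : Set Ω := {x : Ω | (x : Matrix (Fin (2 * n)) (Fin (2 * n)) ℝ)ᵀ * ω * x = ω} with hS
  set S' : Set Ω := {x : Ω | (x : Matrix (Fin (2 * n)) (Fin (2 * n)) ℝ)ᵀ * ω * x = -ω} with hS'
  have hSpre : S = f ⁻¹' {ω} := by ext x; simp [hS, hf]
  have hS'pre : S' = f ⁻¹' {-ω} := by ext x; simp [hS', hf]
  have hScl : IsClosed S := by rw [hSpre]; exact isClosed_singleton.preimage hfc
  have hS'cl : IsClosed S' := by rw [hS'pre]; exact isClosed_singleton.preimage hfc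
  have hcompl : Sᶜ = S' := by
    ext x
    simp only [Set.mem_compl_iff, Set.mem_setOf_eq, hS, hS']
    constructor
    · intro h
      exact x.2.resolve_left h
    · intro h h'
      exact hωneg (h'.symm.trans h)
  have hSop : IsOpen S := by
    rw [← compl_compl S]
    rw [hcompl]
    exact hS'cl.isOpen_compl
  refine ⟨hSop, hScl, ?_⟩
  intro hpc
  have hS'op : IsOpen S' := by rw [← hcompl]; exact hScl.isOpen_compl
  obtain ⟨Banti, hBanti⟩ := exists_antisymplectic ω hskew hinv
  have hone : (1 : Matrix (Fin (2 * n)) (Fin (2 * n)) ℝ) ∈ Ω := by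
    left; simp
  have hBmem : Banti ∈ Ω := Or.inr hBanti
  have h1 : ((⟨1, hone⟩ : Ω) : Ω) ∈ S := by
    simp [hS]
  have h2 : ((⟨Banti, hBmem⟩ : Ω) : Ω) ∈ S' := hBanti
  have := hpc S S' hSop hS'op
    (by
      intro x _
      rcases x.2 with h | h
      · exact Or.inl h
      · exact Or.inr h)
    ⟨⟨1, hone⟩, trivial, h1⟩
    ⟨⟨Banti, hBmem⟩, trivial, h2⟩
  obtain ⟨x, -, hxS, hxS'⟩ := this
  rw [← hcompl] at hxS'
  exact hxS' hxS
end
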